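/- arXiv:1105.1611 — 2 statements merged into one kernel-verified Lean document; each statement's English description precedes it below -/
import Mathlib

section
/- Let N be a nested separation system of a finite graph G, and let T(N) be the multigraph whose nodes are the ∼-equivalence classes of N and whose edges are the pairs {(A,B),(B,A)} for (A,B) ∈ N, joining [(A,B)] to [(B,A)]. Then T(N) is a tree. -/
open Set

variable {V : Type*}

/-- A separation of a graph `G`: a pair of vertex sets covering `V` such that
every edge lies within one of the sides. -/
def IsSep (G : SimpleGraph V) (p : Set V × Set V) : Prop :=
  p.1 ∪ p.2 = Set.univ ∧
    ∀ x y, G.Adj x y → (x ∈ p.1 ∧ y ∈ p.1) ∨ (x ∈ p.2 ∧ y ∈ p.2)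

/-- The partial order on separations: `(A,B) ≤ (C,D)` iff `A ⊆ C` and `B ⊇ D`. -/
def SepLE (p q : Set V × Set V) : Prop :=
  p.1 ⊆ q.1 ∧ q.2 ⊆ p.2

/-- The inverse of a separation. -/
def flipSep (p : Set V × Set V) : Set V × Set V := (p.2, p.1)

/-- A separation is proper if both sides minus the other are nonempty. -/
def IsProper (p : Set V × Set V) : Prop :=
  (p.1 \ p.2).Nonempty ∧ (p.2 \ p.1).Nonempty

/-- `≤`-comparability of separations. -/
def SepComparable (p q : Set V × Set V) : Prop := SepLE p q ∨ SepLE q p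

/-- Two separations are nested if one is comparable with the other or its inverse. -/
def Nested (p q : Set V × Set V) : Prop :=
  SepComparable p q ∨ SepComparable p (flipSep q)

/-- A separation `(A,B)` separates a vertex set `I` if `I` meets both `A∖B` and `B∖A`. -/
def SepSeparates (p : Set V × Set V) (I : Set V) : Prop :=
  (I ∩ (p.1 \ p.2)).Nonempty ∧ (I ∩ (p.2 \ p.1)).Nonempty

/-- A set is `S`-inseparable if no separation in `S` separates it. -/
def Insep (S : Set (Set V × Set V)) (U : Set V) : Prop :=
  ∀ p ∈ S, ¬ SepSeparates p U

/-- An `S`-block: a maximal `S`-inseparable vertex set. -/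
def IsBlock (S : Set (Set V × Set V)) (b : Set V) : Prop :=
  Insep S b ∧ ∀ b', Insep S b' → b ⊆ b' → b' = b

/-- A separation system: a symmetric set of proper separations. -/
def SepSystem (G : SimpleGraph V) (N : Set (Set V × Set V)) : Prop :=
  (∀ p ∈ N, IsSep G p ∧ IsProper p) ∧ ∀ p ∈ N, flipSep p ∈ N

/-- A nested separation system. -/
def NestedSys (G : SimpleGraph V) (N : Set (Set V × Set V)) : Prop :=
  SepSystem G N ∧ ∀ p ∈ N, ∀ q ∈ N, Nested p q

/-- Strict version of `SepLE`. -/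
def SepLT (p q : Set V × Set V) : Prop := SepLE p q ∧ p ≠ q

/-- `p` is a predecessor of `q` in `(N, ≤)`. -/
def SepPred (N : Set (Set V × Set V)) (p q : Set V × Set V) : Prop :=
  p ∈ N ∧ q ∈ N ∧ SepLT p q ∧ ∀ r ∈ N, ¬ (SepLT p r ∧ SepLT r q)

/-- The relation `∼` on a nested separation system `N`:
`(A,B) ∼ (C,D)` iff they are equal or `(B,A)` is a predecessor of `(C,D)` in `(N,≤)`. -/
def SimRel (N : Set (Set V × Set V)) (p q : Set V × Set V) : Prop :=
  p = q ∨ SepPred N (flipSep p) q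

/-- The `∼`-equivalence class of a separation `p ∈ N`. -/
def classOf (N : Set (Set V × Set V)) (p : Set V × Set V) : Set (Set V × Set V) :=
  {q | q ∈ N ∧ SimRel N p q}

/-- The part `V_t` associated with a node `t` of the structure tree. -/
def Vpart (t : Set (Set V × Set V)) : Set V := {v | ∀ p ∈ t, v ∈ p.1}

/-- The four corner separations of the cross-diagram of two separations. -/
def cornerSep (p q : Set V × Set V) : Fin 4 → Set V × Set V :=
  ![(p.1 ∩ q.1, p.2 ∪ q.2), (p.1 ∩ q.2, p.2 ∪ q.1),
    (p.2 ∩ q.1, p.1 ∪ q.2), (p.2 ∩ q.2, p.1 ∪ q.1)]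

/-- `p` weakly separates `I₁` and `I₂`. -/
def WeaklySep (p : Set V × Set V) (I₁ I₂ : Set V) : Prop :=
  (I₁ ⊆ p.1 ∧ I₂ ⊆ p.2) ∨ (I₁ ⊆ p.2 ∧ I₂ ⊆ p.1)

/-- `S` separates the collection `I` well. -/
def SeparatesWell (S : Set (Set V × Set V)) (I : Set (Set V)) : Prop :=
  ∀ p ∈ S, ∀ q ∈ S, ¬ Nested p q →
    ∀ I₁ ∈ I, ∀ I₂ ∈ I, I₁ ⊆ p.1 ∩ q.1 → I₂ ⊆ p.2 ∩ q.2 →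
      ∃ r ∈ S, I₁ ⊆ r.1 ∧ r.1 ⊆ p.1 ∩ q.1 ∧ p.2 ∪ q.2 ⊆ r.2

/-- An extremal separation of a separation system `S`. -/
def Extremal (S : Set (Set V × Set V)) (p : Set V × Set V) : Prop :=
  ∀ q ∈ S, SepLE p q ∨ SepLE p (flipSep q)

/-- A tight separation: every vertex of the separator has neighbours on both sides. -/
def Tight (G : SimpleGraph V) (p : Set V × Set V) : Prop :=
  ∀ v ∈ p.1 ∩ p.2, (∃ x ∈ p.1 \ p.2, G.Adj v x) ∧ ∃ y ∈ p.2 \ p.1, G.Adj v y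

/-- The adjacency used to build the structure tree: two nodes (equivalence classes)
are related if some separation `p ∈ N` has one as `[p]` and the other as `[flip p]`. -/
def nodeRel (N : Set (Set V × Set V))
    (s t : {t : Set (Set V × Set V) // ∃ p ∈ N, t = classOf N p}) : Prop :=
  ∃ p ∈ N, s.val = classOf N p ∧ t.val = classOf N (flipSep p)


/-! ### Auxiliary lemmas -/

section Aux

lemma flipSep_flip_flip (p : Set V × Set V) : flipSep (flipSep p) = p := rfl

lemma flip_inj {p q : Set V × Set V} (h : flipSep p = flipSep q) : p = q := by
  have := congrArg flipSep h; rwa [flipSep_flip_flip, flipSep_flip_flip] at this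

lemma sepLE_refl (p : Set V × Set V) : SepLE p p := ⟨subset_rfl, subset_rfl⟩

lemma sepLE_trans {p q r : Set V × Set V} (h1 : SepLE p q) (h2 : SepLE q r) : SepLE p r :=
  ⟨h1.1.trans h2.1, h2.2.trans h1.2⟩

lemma sepLE_antisymm {p q : Set V × Set V} (h1 : SepLE p q) (h2 : SepLE q p) : p = q :=
  Prod.ext (h1.1.antisymm h2.1) (h2.2.antisymm h1.2)

lemma sepLE_flip_iff {p q : Set V × Set V} : SepLE (flipSep p) (flipSep q) ↔ SepLE q p :=
  ⟨fun h => ⟨h.2, h.1⟩, fun h => ⟨h.2, h.1⟩⟩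

lemma sepLE_flip_left {p q : Set V × Set V} : SepLE (flipSep p) q ↔ SepLE (flipSep q) p :=
  ⟨fun h => ⟨h.2, h.1⟩, fun h => ⟨h.2, h.1⟩⟩

lemma sepLE_flip_right {p q : Set V × Set V} : SepLE p (flipSep q) ↔ SepLE q (flipSep p) :=
  ⟨fun h => ⟨h.2, h.1⟩, fun h => ⟨h.2, h.1⟩⟩

lemma sepLT_flip_iff {p q : Set V × Set V} : SepLT (flipSep p) (flipSep q) ↔ SepLT q p :=
  ⟨fun h => ⟨sepLE_flip_iff.mp h.1, fun e => h.2 (by rw [e])⟩,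
   fun h => ⟨sepLE_flip_iff.mpr h.1, fun e => h.2 (flip_inj e).symm⟩⟩

lemma sepLT_flip_left {p q : Set V × Set V} : SepLT (flipSep p) q ↔ SepLT (flipSep q) p :=
  ⟨fun h => ⟨sepLE_flip_left.mp h.1, fun e => h.2 (by rw [← e, flipSep_flip_flip])⟩,
   fun h => ⟨sepLE_flip_left.mp h.1, fun e => h.2 (by rw [← e, flipSep_flip_flip])⟩⟩

lemma sepLT_trans {p q r : Set V × Set V} (h1 : SepLT p q) (h2 : SepLT q r) : SepLT p r :=
  ⟨sepLE_trans h1.1 h2.1, fun e => h2.2 (sepLE_antisymm h2.1 (e ▸ h1.1))⟩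

lemma ne_flip_self {p : Set V × Set V} (hp : IsProper p) : p ≠ flipSep p := by
  intro e
  obtain ⟨x, hx1, hx2⟩ := hp.1
  have h1 : p.1 = p.2 := congrArg Prod.fst e
  exact hx2 (h1 ▸ hx1)

lemma not_proper_of₁ {p q : Set V × Set V} (hcov : p.1 ∪ p.2 = Set.univ)
    (h1 : SepLE p q) (h2 : SepLE (flipSep p) q) : ¬ IsProper q := by
  intro hq
  obtain ⟨x, hx2, hx1⟩ := hq.2
  have hx : x ∈ p.1 ∪ p.2 := by rw [hcov]; exact mem_univ x
  rcases hx with h | h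
  · exact hx1 (h1.1 h)
  · exact hx1 (h2.1 h)

lemma not_proper_of₂ {p q : Set V × Set V} (h1 : SepLE q p) (h2 : SepLE (flipSep p) q) :
    ¬ IsProper p := by
  intro hp
  obtain ⟨x, hx2, hx1⟩ := hp.2
  exact hx1 (h1.1 (h2.1 hx2))

variable {N : Set (Set V × Set V)}

lemma sepPred_flip_mp (hsym : ∀ r ∈ N, flipSep r ∈ N) {p q : Set V × Set V}
    (h : SepPred N (flipSep p) q) (hp : p ∈ N) : SepPred N (flipSep q) p := by
  obtain ⟨hfp, hq, hlt, hmin⟩ := h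
  refine ⟨hsym q hq, hp, sepLT_flip_left.mp hlt, ?_⟩
  rintro r hr ⟨h1, h2⟩
  exact hmin (flipSep r) (hsym r hr) ⟨sepLT_flip_iff.mpr h2, sepLT_flip_left.mp h1⟩

lemma simRel_symm (hsym : ∀ r ∈ N, flipSep r ∈ N) {p q : Set V × Set V}
    (hp : p ∈ N) (h : SimRel N p q) : SimRel N q p := by
  rcases h with rfl | h
  · exact Or.inl rfl
  · exact Or.inr (sepPred_flip_mp hsym h hp)

lemma simRel_trans {G : SimpleGraph V} (hN : NestedSys G N) {p q r : Set V × Set V}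
    (hp : p ∈ N) (hq : q ∈ N) (hr : r ∈ N)
    (h1 : SimRel N p q) (h2 : SimRel N q r) : SimRel N p r := by
  have cover : ∀ s ∈ N, s.1 ∪ s.2 = Set.univ := fun s hs => (hN.1.1 s hs).1.1
  have prop : ∀ s ∈ N, IsProper s := fun s hs => (hN.1.1 s hs).2
  have hsym := hN.1.2
  have hnest := hN.2
  rcases h1 with rfl | h1
  · exact h2
  rcases h2 with rfl | h2
  · exact Or.inr h1
  by_cases hpr : p = r
  · exact Or.inl hpr
  right
  have h2' : SepPred N (flipSep r) q := sepPred_flip_mp hsym h2 hq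
  have hfp : flipSep p ∈ N := hsym p hp
  have hfq : flipSep q ∈ N := hsym q hq
  have hfr : flipSep r ∈ N := hsym r hr
  have hlt1 : SepLT (flipSep p) q := h1.2.2.1
  have hlt2 : SepLT (flipSep r) q := h2'.2.2.1
  have hlt3 : SepLT (flipSep q) r := h2.2.2.1
  have hmin1 := h1.2.2.2
  have hmin2 := h2'.2.2.2
  have key : SepLT (flipSep p) r := by
    rcases hnest p hp r hr with (hle | hle) | (hle | hle)
    · exfalso
      have hle' : SepLE (flipSep r) (flipSep p) := sepLE_flip_iff.mpr hle
      exact hmin2 (flipSep p) hfp ⟨⟨hle', fun e => hpr (flip_inj e).symm⟩, hlt1⟩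
    · exfalso
      have hle' : SepLE (flipSep p) (flipSep r) := sepLE_flip_iff.mpr hle
      exact hmin1 (flipSep r) hfr ⟨⟨hle', fun e => hpr (flip_inj e)⟩, hlt2⟩
    · exfalso
      have hrfp : SepLE r (flipSep p) := sepLE_flip_right.mp hle
      have hrq : SepLE r q := sepLE_trans hrfp hlt1.1
      exact not_proper_of₁ (cover r hr) hrq hlt2.1 (prop q hq)
    · refine ⟨sepLE_flip_left.mp hle, fun e => ?_⟩
      have hrq : SepLE r q := e ▸ hlt1.1
      exact not_proper_of₁ (cover r hr) hrq hlt2.1 (prop q hq)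
  refine ⟨hfp, hr, key, ?_⟩
  rintro s hs ⟨hps, hsr⟩
  rcases hnest s hs q hq with (hle | hle) | (hle | hle)
  · by_cases hsq : s = q
    · subst hsq
      exact not_proper_of₁ (cover s hs) hsr.1 hlt3.1 (prop r hr)
    · exact hmin1 s hs ⟨hps, ⟨hle, hsq⟩⟩
  · have hqr : SepLE q r := sepLE_trans hle hsr.1
    exact not_proper_of₁ (cover q hq) hqr hlt3.1 (prop r hr)
  · have ha : SepLE q (flipSep s) := sepLE_flip_right.mp hle
    have hb : SepLE (flipSep s) p := sepLE_flip_left.mp hps.1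
    exact not_proper_of₂ (sepLE_trans ha hb) hlt1.1 (prop p hp)
  · by_cases hqs : flipSep q = s
    · rw [← hqs] at hps
      exact not_proper_of₂ (sepLT_flip_iff.mp hps).1 hlt1.1 (prop p hp)
    · exact h2.2.2.2 s hs ⟨⟨hle, hqs⟩, hsr⟩

lemma mem_classOf_self {p : Set V × Set V} (hp : p ∈ N) : p ∈ classOf N p :=
  ⟨hp, Or.inl rfl⟩

lemma simRel_of_classOf_eq {p q : Set V × Set V} (hq : q ∈ N)
    (h : classOf N p = classOf N q) : SimRel N p q := by
  have hmem : q ∈ classOf N p := by rw [h]; exact mem_classOf_self hq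
  exact hmem.2

lemma classOf_eq_of_simRel {G : SimpleGraph V} (hN : NestedSys G N) {p q : Set V × Set V}
    (hp : p ∈ N) (hq : q ∈ N) (h : SimRel N p q) : classOf N p = classOf N q := by
  ext x
  simp only [classOf, mem_setOf_eq]
  constructor
  · rintro ⟨hx, hpx⟩
    exact ⟨hx, simRel_trans hN hq hp hx (simRel_symm hN.1.2 hp h) hpx⟩
  · rintro ⟨hx, hqx⟩
    exact ⟨hx, simRel_trans hN hp hq hx h hqx⟩

lemma class_ne_flip {G : SimpleGraph V} (hN : NestedSys G N) {p : Set V × Set V} (hp : p ∈ N) :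
    classOf N p ≠ classOf N (flipSep p) := by
  intro h
  have hmem : p ∈ classOf N (flipSep p) := by rw [← h]; exact mem_classOf_self hp
  rcases hmem.2 with e | hpred
  · exact ne_flip_self ((hN.1.1 p hp).2) e.symm
  · rw [flipSep_flip_flip] at hpred
    exact hpred.2.2.1.2 rfl

/-- The node of the structure tree associated with `p ∈ N`. -/
def vtx (N : Set (Set V × Set V)) (p : Set V × Set V) (hp : p ∈ N) :
    {t : Set (Set V × Set V) // ∃ p ∈ N, t = classOf N p} := ⟨classOf N p, p, hp, rfl⟩

lemma adj_vtx {G : SimpleGraph V} (hN : NestedSys G N) {p : Set V × Set V} (hp : p ∈ N) :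
    (SimpleGraph.fromRel (nodeRel N)).Adj (vtx N p hp) (vtx N (flipSep p) (hN.1.2 p hp)) := by
  rw [SimpleGraph.fromRel_adj]
  exact ⟨fun h => class_ne_flip hN hp (congrArg Subtype.val h), Or.inl ⟨p, hp, rfl, rfl⟩⟩

lemma adj_extract {G : SimpleGraph V} (hN : NestedSys G N)
    {u u' : {t : Set (Set V × Set V) // ∃ p ∈ N, t = classOf N p}}
    (h : (SimpleGraph.fromRel (nodeRel N)).Adj u u') :
    ∃ r, ∃ hr : r ∈ N, u = vtx N r hr ∧ u' = vtx N (flipSep r) (hN.1.2 r hr) := by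
  rw [SimpleGraph.fromRel_adj] at h
  rcases h.2 with ⟨r, hr, h1, h2⟩ | ⟨r, hr, h1, h2⟩
  · exact ⟨r, hr, Subtype.ext h1, Subtype.ext h2⟩
  · exact ⟨flipSep r, hN.1.2 r hr, Subtype.ext h2, Subtype.ext h1⟩

/-- The separations strictly between `p` and `q`. -/
def between (N : Set (Set V × Set V)) (p q : Set V × Set V) : Set (Set V × Set V) :=
  {s | s ∈ N ∧ SepLT p s ∧ SepLT s q}

lemma reach_of_pred {G : SimpleGraph V} (hN : NestedSys G N) {p q : Set V × Set V}
    (hp : p ∈ N) (hq : q ∈ N) (hpred : SepPred N p q) :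
    (SimpleGraph.fromRel (nodeRel N)).Reachable (vtx N (flipSep p) (hN.1.2 p hp)) (vtx N q hq) := by
  have hsim : SimRel N (flipSep p) q := Or.inr (by rw [flipSep_flip_flip]; exact hpred)
  have hcl := classOf_eq_of_simRel hN (hN.1.2 p hp) hq hsim
  rw [show vtx N (flipSep p) (hN.1.2 p hp) = vtx N q hq from Subtype.ext hcl]

lemma reach_aux [Fintype V] {G : SimpleGraph V} (hN : NestedSys G N) :
    ∀ n : ℕ, ∀ p q (hp : p ∈ N) (hq : q ∈ N), SepLT p q → (between N p q).ncard ≤ n →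
      (SimpleGraph.fromRel (nodeRel N)).Reachable
        (vtx N (flipSep p) (hN.1.2 p hp)) (vtx N q hq) := by
  intro n
  induction n with
  | zero =>
    intro p q hp hq hlt hcard
    have hfin : (between N p q).Finite := Set.toFinite _
    have hemp : between N p q = ∅ := (Set.ncard_eq_zero hfin).mp (Nat.le_zero.mp hcard)
    refine reach_of_pred hN hp hq ⟨hp, hq, hlt, fun s hs hcon => ?_⟩
    have hmem : s ∈ between N p q := ⟨hs, hcon.1, hcon.2⟩
    rw [hemp] at hmem
    exact hmem
  | succ n ih =>
    intro p q hp hq hlt hcard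
    by_cases hemp : between N p q = ∅
    · refine reach_of_pred hN hp hq ⟨hp, hq, hlt, fun s hs hcon => ?_⟩
      have hmem : s ∈ between N p q := ⟨hs, hcon.1, hcon.2⟩
      rw [hemp] at hmem
      exact hmem
    · obtain ⟨r, hrN, hpr, hrq⟩ := Set.nonempty_iff_ne_empty.mpr hemp
      have hfin : (between N p q).Finite := Set.toFinite _
      have hrb : r ∈ between N p q := ⟨hrN, hpr, hrq⟩
      have hdlt := Set.ncard_diff_singleton_lt_of_mem hrb hfin
      have hsub1 : between N p r ⊆ between N p q \ {r} := by
        rintro s ⟨hs, h1, h2⟩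
        refine ⟨⟨hs, h1, sepLT_trans h2 hrq⟩, fun e => ?_⟩
        rw [mem_singleton_iff] at e
        exact h2.2 e
      have hsub2 : between N r q ⊆ between N p q \ {r} := by
        rintro s ⟨hs, h1, h2⟩
        refine ⟨⟨hs, sepLT_trans hpr h1, h2⟩, fun e => ?_⟩
        rw [mem_singleton_iff] at e
        exact h1.2 e.symm
      have hc1 : (between N p r).ncard ≤ n := by
        have := Set.ncard_le_ncard hsub1 hfin.diff
        omega
      have hc2 : (between N r q).ncard ≤ n := by
        have := Set.ncard_le_ncard hsub2 hfin.diff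
        omega
      have R1 := ih p r hp hrN hpr hc1
      have R2 := ih r q hrN hq hrq hc2
      exact R1.trans ((adj_vtx hN hrN).reachable.trans R2)

lemma reach_main [Fintype V] {G : SimpleGraph V} (hN : NestedSys G N) {p q : Set V × Set V}
    (hp : p ∈ N) (hq : q ∈ N) :
    (SimpleGraph.fromRel (nodeRel N)).Reachable (vtx N p hp) (vtx N q hq) := by
  rcases hN.2 p hp q hq with (hle | hle) | (hle | hle)
  · by_cases e : p = q
    · subst e; exact SimpleGraph.Reachable.refl _
    · exact (adj_vtx hN hp).reachable.trans
        (reach_aux hN (between N p q).ncard p q hp hq ⟨hle, e⟩ le_rfl)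
  · by_cases e : q = p
    · subst e; exact SimpleGraph.Reachable.refl _
    · exact ((adj_vtx hN hq).reachable.trans
        (reach_aux hN (between N q p).ncard q p hq hp ⟨hle, e⟩ le_rfl)).symm
  · by_cases e : p = flipSep q
    · subst e
      exact ((adj_vtx hN hq).reachable.symm : _)
    · have hfq : flipSep q ∈ N := hN.1.2 q hq
      have R := reach_aux hN (between N p (flipSep q)).ncard p (flipSep q) hp hfq ⟨hle, e⟩ le_rfl
      exact (adj_vtx hN hp).reachable.trans (R.trans (adj_vtx hN hq).reachable.symm)
  · by_cases e : flipSep q = p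
    · have hv : vtx N (flipSep q) (hN.1.2 q hq) = vtx N p hp :=
        Subtype.ext (congrArg (classOf N) e)
      rw [← hv]
      exact (adj_vtx hN hq).reachable.symm
    · have hfq : flipSep q ∈ N := hN.1.2 q hq
      have R := reach_aux hN (between N (flipSep q) p).ncard (flipSep q) p hfq hp ⟨hle, e⟩ le_rfl
      exact (R.symm : _)

lemma walk_lemma {G : SimpleGraph V} (hN : NestedSys G N)
    {u v : {t : Set (Set V × Set V) // ∃ p ∈ N, t = classOf N p}}
    (w : (SimpleGraph.fromRel (nodeRel N)).Walk u v) :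
    w.IsTrail → ∀ p (hp : p ∈ N), u = vtx N (flipSep p) (hN.1.2 p hp) →
      s(vtx N p hp, vtx N (flipSep p) (hN.1.2 p hp)) ∉ w.edges →
      ∃ q, ∃ hq : q ∈ N, SepLE p q ∧ v = vtx N (flipSep q) (hN.1.2 q hq) ∧
        (q = p ∨ s(vtx N q hq, vtx N (flipSep q) (hN.1.2 q hq)) ∈ w.edges) := by
  induction w with
  | nil =>
    intro _ p hp hu _
    exact ⟨p, hp, sepLE_refl p, hu, Or.inl rfl⟩
  | @cons u u' v h w ih =>
    intro htrail p hp hu hnot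
    obtain ⟨r, hr, hur, hu'r⟩ := adj_extract hN h
    have hclass : classOf N (flipSep p) = classOf N r := congrArg Subtype.val (hu.symm.trans hur)
    have hsim : SimRel N (flipSep p) r := simRel_of_classOf_eq hr hclass
    rcases hsim with e | hpred
    · exfalso
      apply hnot
      rw [SimpleGraph.Walk.edges_cons]
      have hv2 : vtx N (flipSep r) (hN.1.2 r hr) = vtx N p hp :=
        Subtype.ext (congrArg (fun x => classOf N (flipSep x)) e.symm)
      have hedge : s(vtx N p hp, vtx N (flipSep p) (hN.1.2 p hp)) = s(u, u') := by
        rw [hu, hu'r, hv2]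
        exact Sym2.eq_swap
      rw [hedge]
      exact List.mem_cons_self
    · rw [flipSep_flip_flip] at hpred
      have hple : SepLE p r := hpred.2.2.1.1
      have htrail' := (SimpleGraph.Walk.isTrail_cons h w).mp htrail
      have hsym2 : s(u, u') = s(vtx N r hr, vtx N (flipSep r) (hN.1.2 r hr)) := by
        rw [hur, hu'r]
      have hnotr : s(vtx N r hr, vtx N (flipSep r) (hN.1.2 r hr)) ∉ w.edges :=
        hsym2 ▸ htrail'.2
      obtain ⟨q, hq, hle, hv, hor⟩ := ih htrail'.1 r hr hu'r hnotr
      refine ⟨q, hq, sepLE_trans hple hle, hv, Or.inr ?_⟩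
      rw [SimpleGraph.Walk.edges_cons]
      rcases hor with rfl | hmem
      · exact List.mem_cons.mpr (Or.inl (by rw [hur, hu'r]))
      · exact List.mem_cons_of_mem _ hmem

end Aux

/-- The structure tree `T(N)` of a (nonempty) nested separation system
is a tree: the graph on the `∼`-classes is a tree, no edge is a loop, and separations
defining the same edge coincide up to flipping (no parallel edges). -/
theorem structureTree_isTree [Fintype V] (G : SimpleGraph V) (N : Set (Set V × Set V))
    (hN : NestedSys G N) (hne : N.Nonempty) :
    (SimpleGraph.fromRel (nodeRel N)).IsTree ∧
    (∀ p ∈ N, classOf N p ≠ classOf N (flipSep p)) ∧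
    (∀ p ∈ N, ∀ q ∈ N,
      ({classOf N p, classOf N (flipSep p)} : Set (Set (Set V × Set V))) =
        {classOf N q, classOf N (flipSep q)} → q = p ∨ q = flipSep p) := by
  have hsym := hN.1.2
  have hloop : ∀ p ∈ N, classOf N p ≠ classOf N (flipSep p) := fun p hp => class_ne_flip hN hp
  refine ⟨⟨?_, ?_⟩, hloop, ?_⟩
  · -- connected
    rw [SimpleGraph.connected_iff]
    constructor
    · intro a b
      obtain ⟨av, p, hp, rfl⟩ := a
      obtain ⟨bv, q, hq, rfl⟩ := b
      exact reach_main hN hp hq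
    · obtain ⟨p0, hp0⟩ := hne
      exact ⟨vtx N p0 hp0⟩
  · -- acyclic
    intro v c hc
    cases c with
    | nil => exact hc.isCircuit.ne_nil rfl
    | @cons _ b _ h w =>
      obtain ⟨p, hp, hv, hu'⟩ := adj_extract hN h
      have htr := hc.isCircuit.isTrail
      have hct := (SimpleGraph.Walk.isTrail_cons h w).mp htr
      have hsym2 : s(v, b) = s(vtx N p hp, vtx N (flipSep p) (hN.1.2 p hp)) := by
        rw [hv, hu']
      have hnot : s(vtx N p hp, vtx N (flipSep p) (hN.1.2 p hp)) ∉ w.edges :=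
        hsym2 ▸ hct.2
      obtain ⟨q, hq, hle, hveq, hor⟩ := walk_lemma hN w hct.1 p hp hu' hnot
      rcases hor with e | hmem
      · have hcl := congrArg Subtype.val (hv.symm.trans hveq)
        exact hloop p hp (hcl.trans (congrArg (fun x => classOf N (flipSep x)) e))
      · have hclass : classOf N p = classOf N (flipSep q) :=
          congrArg Subtype.val (hv.symm.trans hveq)
        rcases simRel_of_classOf_eq (hsym q hq) hclass with e | hpred
        · apply hnot
          have e1 : vtx N (flipSep q) (hsym q hq) = vtx N p hp :=
            Subtype.ext (congrArg (classOf N) e.symm)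
          have e2 : vtx N q hq = vtx N (flipSep p) (hN.1.2 p hp) :=
            Subtype.ext (congrArg (fun x => classOf N (flipSep x)) e).symm
          rw [← e1, ← e2, Sym2.eq_swap]
          exact hmem
        · have h1 : SepLT q p := sepLT_flip_iff.mp hpred.2.2.1
          exact h1.2 (sepLE_antisymm h1.1 hle)
  · -- no parallel edges
    intro p hp q hq hset
    have hmem1 : classOf N p ∈ ({classOf N q, classOf N (flipSep q)} :
        Set (Set (Set V × Set V))) := by
      rw [← hset]; exact Set.mem_insert _ _
    have hmem2 : classOf N (flipSep p) ∈ ({classOf N q, classOf N (flipSep q)} :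
        Set (Set (Set V × Set V))) := by
      rw [← hset]; exact Set.mem_insert_of_mem _ (Set.mem_singleton _)
    simp only [Set.mem_insert_iff, Set.mem_singleton_iff] at hmem1 hmem2
    rcases hmem1 with h1 | h1 <;> rcases hmem2 with h2 | h2
    · exact absurd (h1.trans h2.symm) (hloop p hp)
    · rcases simRel_of_classOf_eq hq h1 with e | pr1
      · exact Or.inl e.symm
      rcases simRel_of_classOf_eq (hsym q hq) h2 with e2 | pr2
      · exact Or.inl (flip_inj e2).symm
      · exfalso
        rw [flipSep_flip_flip] at pr2
        have hlt1 := pr1.2.2.1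
        have hle2 := pr2.2.2.1.1
        have hfq : flipSep p = q :=
          Prod.ext (hlt1.1.1.antisymm hle2.2) (hle2.1.antisymm hlt1.1.2)
        exact hlt1.2 hfq
    · rcases simRel_of_classOf_eq (hsym q hq) h1 with e | pr1
      · exact Or.inr (by rw [e, flipSep_flip_flip])
      rcases simRel_of_classOf_eq hq h2 with e2 | pr2
      · exact Or.inr e2.symm
      · exfalso
        rw [flipSep_flip_flip] at pr2
        have hlt2 := pr2.2.2.1
        have hqp := sepLT_flip_iff.mp pr1.2.2.1
        exact hlt2.2 (sepLE_antisymm hlt2.1 hqp.1)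
    · exact absurd (h1.trans h2.symm) (hloop p hp)
end

section
/- Let N be a nested separation system of a finite graph G with structure tree T = T(N) and parts V_t = ⋂{A : (A,B) ∈ t}. Every node t of T is either a block node (V_t is an N-block, i.e., a maximal N-inseparable set) or a hub node (V_t = A∩B for some (A,B) ∈ t). -/
open Set

variable {V : Type*}

/-- A measure on separations that is strictly monotone w.r.t. `SepLT`. -/
noncomputable def sepMeasure (p : Set V × Set V) : ℕ := p.1.ncard + p.2ᶜ.ncard

lemma sepMeasure_lt [Fintype V] {s r : Set V × Set V} (h : SepLT s r) :
    sepMeasure s < sepMeasure r := by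
  obtain ⟨⟨h1, h2⟩, hne⟩ := h
  have hc : s.2ᶜ ⊆ r.2ᶜ := compl_subset_compl.2 h2
  by_cases he : s.1 = r.1
  · have h2ne : s.2 ≠ r.2 := fun hh => hne (Prod.ext he hh)
    have hss : s.2ᶜ ⊂ r.2ᶜ :=
      ⟨hc, fun hh => h2ne (compl_inj_iff.mp (subset_antisymm hc hh))⟩
    have h3 := Set.ncard_lt_ncard hss (Set.toFinite _)
    unfold sepMeasure
    rw [he]
    omega
  · have hss : s.1 ⊂ r.1 := ⟨h1, fun hh => he (subset_antisymm h1 hh)⟩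
    have h3 := Set.ncard_lt_ncard hss (Set.toFinite _)
    have h4 := Set.ncard_le_ncard hc (Set.toFinite _)
    unfold sepMeasure
    omega

/-- Below any `c > a` in `N` there is a successor (predecessor of the order) of `a`. -/
lemma exists_pred_le [Fintype V] {N : Set (Set V × Set V)} {a c : Set V × Set V}
    (ha : a ∈ N) (hc : c ∈ N) (h : SepLT a c) :
    ∃ r ∈ N, SepPred N a r ∧ SepLE r c := by
  classical
  set S : Set (Set V × Set V) := {r | r ∈ N ∧ SepLT a r ∧ SepLE r c} with hS
  have hcS : c ∈ S := ⟨hc, h, subset_rfl, subset_rfl⟩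
  obtain ⟨r, hrS, hmin⟩ :=
    Set.Finite.exists_minimalFor sepMeasure S (Set.toFinite S) ⟨c, hcS⟩
  refine ⟨r, hrS.1, ⟨ha, hrS.1, hrS.2.1, ?_⟩, hrS.2.2⟩
  rintro s hsN ⟨has, hsr⟩
  have hsS : s ∈ S := ⟨hsN, has, sepLE_trans hsr.1 hrS.2.2⟩
  have hlt := sepMeasure_lt hsr
  have heq := hmin (j := s) hsS (le_of_lt hlt)
  omega

/-- Separations in one class point away from each other. -/
lemma star_lemma {G : SimpleGraph V} {N : Set (Set V × Set V)} (hN : NestedSys G N)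
    {p q r : Set V × Set V} (hp : p ∈ N)
    (hq : q ∈ classOf N p) (hr : r ∈ classOf N p) (hne : q ≠ r) :
    SepLE (flipSep q) r := by
  obtain ⟨hqN, hqs⟩ : q ∈ N ∧ SimRel N p q := hq
  obtain ⟨hrN, hrs⟩ : r ∈ N ∧ SimRel N p r := hr
  rcases hqs with hqs | hqpred
  · rcases hrs with hrs | hrpred
    · exact absurd (hqs.symm.trans hrs) hne
    · subst hqs
      exact hrpred.2.2.1.1
  · rcases hrs with hrs | hrpred
    · subst hrs
      obtain ⟨h1, h2⟩ := hqpred.2.2.1.1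
      exact ⟨h2, h1⟩
    · have hnest := hN.2 q hqN r hrN
      simp only [Nested, SepComparable] at hnest
      rcases hnest with (hle | hle) | (hle | hle)
      · exact absurd ⟨hqpred.2.2.1, hle, hne⟩ (hrpred.2.2.2 q hqN)
      · exact absurd ⟨hrpred.2.2.1, hle, Ne.symm hne⟩ (hqpred.2.2.2 r hrN)
      · obtain ⟨z, hz2, hz1⟩ := (hN.1.1 p hp).2.2
        exact absurd (hrpred.2.2.1.1.2 (hle.1 (hqpred.2.2.1.1.1 hz2))) hz1
      · exact ⟨hle.2, hle.1⟩

lemma hub_aux [Fintype V] {G : SimpleGraph V} {N : Set (Set V × Set V)}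
    (hN : NestedSys G N) {p c : Set V × Set V}
    (hp : p ∈ N) (hc : c ∈ N) (hle : SepLE (flipSep p) c)
    {x y : V} (hx : x ∈ Vpart (classOf N p)) (hx2 : x ∉ c.2)
    (hy : y ∈ Vpart (classOf N p)) (hy1 : y ∉ c.1) : False := by
  have hpt : p ∈ classOf N p := ⟨hp, Or.inl rfl⟩
  by_cases he : flipSep p = c
  · exact hx2 (by rw [← he]; exact hx p hpt)
  · obtain ⟨r, hrN, hpred, hrc⟩ := exists_pred_le (hN.1.2 p hp) hc ⟨hle, he⟩
    have hrt : r ∈ classOf N p := ⟨hrN, Or.inr hpred⟩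
    exact hy1 (hrc.1 (hy r hrt))

/-- Every part of the structure tree is `N`-inseparable. -/
lemma vpart_insep [Fintype V] {G : SimpleGraph V} {N : Set (Set V × Set V)}
    (hN : NestedSys G N) {p : Set V × Set V} (hp : p ∈ N) :
    Insep N (Vpart (classOf N p)) := by
  intro c hc hsep
  obtain ⟨⟨x, hxV, hx1, hx2⟩, ⟨y, hyV, hy1, hy2⟩⟩ := hsep
  have hpt : p ∈ classOf N p := ⟨hp, Or.inl rfl⟩
  have hnest := hN.2 c hc p hp
  simp only [Nested, SepComparable] at hnest
  rcases hnest with (hle | hle) | (hle | hle)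
  · exact hub_aux hN hp (hN.1.2 c hc) ⟨hle.2, hle.1⟩ hyV hy2 hxV hx2
  · exact hy2 (hle.1 (hyV p hpt))
  · exact hx2 (hle.2 (hxV p hpt))
  · exact hub_aux hN hp hc hle hxV hx2 hyV hy2

/-- Every node of the structure tree is a block node or a hub node. -/
theorem node_block_or_hub [Fintype V] (G : SimpleGraph V) (N : Set (Set V × Set V))
    (hN : NestedSys G N) :
    ∀ t : Set (Set V × Set V), (∃ p ∈ N, t = classOf N p) →
      IsBlock N (Vpart t) ∨ ∃ q ∈ t, Vpart t = q.1 ∩ q.2 := by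
  rintro t ⟨p, hp, rfl⟩
  by_cases hb : IsBlock N (Vpart (classOf N p))
  · exact Or.inl hb
  right
  have hins := vpart_insep hN hp
  have hmax : ¬ ∀ b', Insep N b' → Vpart (classOf N p) ⊆ b' → b' = Vpart (classOf N p) := by
    intro h; exact hb ⟨hins, h⟩
  push_neg at hmax
  obtain ⟨b, hbins, hsub, hbne⟩ := hmax
  obtain ⟨x, hxb, hxV⟩ : ∃ x ∈ b, x ∉ Vpart (classOf N p) := by
    by_contra h
    push_neg at h
    exact hbne (subset_antisymm h hsub)
  simp only [Vpart, mem_setOf_eq] at hxV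
  push_neg at hxV
  obtain ⟨q, hqt, hxq1⟩ := hxV
  have hqN : q ∈ N := hqt.1
  have hxq2 : x ∈ q.2 := by
    have hcov : x ∈ q.1 ∪ q.2 := by
      rw [(hN.1.1 q hqN).1.1]; trivial
    rcases hcov with h | h
    · exact absurd h hxq1
    · exact h
  refine ⟨q, hqt, subset_antisymm ?_ ?_⟩
  · intro u hu
    refine ⟨hu q hqt, ?_⟩
    by_contra hu2
    exact hbins q hqN ⟨⟨u, hsub hu, hu q hqt, hu2⟩, ⟨x, hxb, hxq2, hxq1⟩⟩
  · intro v hv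
    intro r hrt
    by_cases hrq : q = r
    · exact hrq ▸ hv.1
    · exact (star_lemma hN hp hqt hrt hrq).1 hv.2
end
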